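/- Under the dueling parameterization Q_θ(s,s') = V_θ(s) + A_θ(s,s') − logsumexp_{s''}(A_θ(s,s'')), with interpretation V_θ(s) = log F_θ(s) and π_θ(s'|s) = softmax of Q_θ(s,·), the soft DQN regression target identity log F_θ(s→s') = log P_B(s|s') + log F_{θ̄}(s') becomes log(P_F(s'|s,θ) F_θ(s)) = log(P_B(s|s') F_{θ̄}(s')), so the squared soft-DQN loss on a transition equals the GFlowNet detailed balance loss (log [P_F(s'|s,θ) F_θ(s) / (P_B(s|s') F_{θ̄}(s'))])² with fixed backward policy. -/
import Mathlib


/-- dueling Soft DQN loss = detailed balance loss. Fix a state `s` with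
action (child) set `A`. Under the dueling parameterization
`Q_θ(s') = V_θ + A_θ(s') − logsumexp A_θ`, with `π_θ = softmax Q_θ` (the forward policy
`P_F(·|s,θ)`) and edge flow `F_θ(s→s') = exp Q_θ(s')`, `F_θ(s) = exp V_θ`, the soft-DQN
squared regression loss on a transition `s → s'` with target
`log P_B(s|s') + log F_{θ̄}(s')` equals the GFlowNet detailed-balance loss
`(log[P_F(s'|s,θ) F_θ(s)] − log[P_B(s|s') F_{θ̄}(s')])²`. -/
theorem dueling_softdqn_loss_is_detailed_balance
    {A : Type} [Fintype A] [Nonempty A]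
    (Vθ : ℝ) (Aθ Qθ πθ : A → ℝ)
    (hQ : ∀ a, Qθ a = Vθ + Aθ a - Real.log (∑ a', Real.exp (Aθ a')))
    (hπ : ∀ a, πθ a = Real.exp (Qθ a) / ∑ a', Real.exp (Qθ a'))
    (PB Fbar : A → ℝ) (hPB : ∀ a, 0 < PB a) (hF : ∀ a, 0 < Fbar a) :
    ∀ a, (Real.log (Real.exp (Qθ a)) - (Real.log (PB a) + Real.log (Fbar a)))^2
        = (Real.log (πθ a * Real.exp Vθ) - Real.log (PB a * Fbar a))^2 := by
  intro a
  have hS : (0:ℝ) < ∑ a', Real.exp (Aθ a') :=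
    Finset.sum_pos (fun i _ => Real.exp_pos _) Finset.univ_nonempty
  have hsum : (∑ a', Real.exp (Qθ a')) = Real.exp Vθ := by
    have : ∀ a', Real.exp (Qθ a')
        = Real.exp Vθ * Real.exp (Aθ a') / (∑ a'', Real.exp (Aθ a'')) := by
      intro a'
      rw [hQ a', Real.exp_sub, Real.exp_add, Real.exp_log hS]
    rw [Finset.sum_congr rfl (fun a' _ => this a'), ← Finset.sum_div,
      ← Finset.mul_sum, mul_div_assoc, div_self hS.ne', mul_one]
  have hkey : πθ a * Real.exp Vθ = Real.exp (Qθ a) := by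
    rw [hπ a, hsum, div_mul_cancel₀ _ (Real.exp_pos Vθ).ne']
  rw [hkey, Real.log_mul (hPB a).ne' (hF a).ne']
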